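/- If B is a prelinear space on a set of 12 points consisting of exactly 8 blocks, each of size 4, then every two blocks of B intersect. -/

import Mathlib

theorem stmt4 {α : Type*} [DecidableEq α] (V : Finset α) (B : Finset (Finset α))
    (hV : V.card = 12) (hB : B.card = 8)
    (hsub : ∀ b ∈ B, b ⊆ V) (hsize : ∀ b ∈ B, b.card = 4)
    (hlin : ∀ b ∈ B, ∀ b' ∈ B, b ≠ b' → (b ∩ b').card ≤ 1) :
    ∀ b ∈ B, ∀ b' ∈ B, (b ∩ b').Nonempty := by
  intro b hb b' hb'
  by_contra hne
  rw [Finset.not_nonempty_iff_eq_empty, ← Finset.disjoint_iff_inter_eq_empty] at hne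
  have hbb' : b ≠ b' := by
    rintro rfl
    have h4 := hsize b hb
    rw [disjoint_self] at hne
    rw [hne] at h4; simp at h4
  set W : Finset α := V \ (b ∪ b') with hWdef
  have hbbV : b ∪ b' ⊆ V := Finset.union_subset (hsub b hb) (hsub b' hb')
  have hW : W.card = 4 := by
    rw [Finset.card_sdiff_of_subset hbbV, Finset.card_union_of_disjoint hne, hsize b hb, hsize b' hb', hV]
  set C : Finset (Finset α) := (B.erase b).erase b' with hCdef
  have hCmem : ∀ c ∈ C, c ∈ B ∧ c ≠ b ∧ c ≠ b' := by
    intro c hc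
    simp only [hCdef, Finset.mem_erase] at hc
    exact ⟨hc.2.2, hc.2.1, hc.1⟩
  have hC : C.card = 6 := by
    rw [hCdef, Finset.card_erase_of_mem, Finset.card_erase_of_mem hb, hB]
    exact Finset.mem_erase.2 ⟨Ne.symm hbb', hb'⟩
  -- singleton intersection lemma
  have hsingle : ∀ c ∈ B, ∀ c' ∈ B, c ≠ c' → ∀ v, v ∈ c → v ∈ c' → c ∩ c' = {v} := by
    intro c hc c' hc' hcc v hv hv'
    have h1 : (c ∩ c').card ≤ 1 := hlin c hc c' hc' hcc
    have hv2 : v ∈ c ∩ c' := Finset.mem_inter.2 ⟨hv, hv'⟩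
    have h0 : 1 ≤ (c ∩ c').card := Finset.card_pos.2 ⟨v, hv2⟩
    obtain ⟨a, ha⟩ := Finset.card_eq_one.1 (le_antisymm h1 h0)
    rw [ha] at hv2 ⊢
    rw [Finset.mem_singleton] at hv2
    rw [hv2]
  -- decomposition of cards
  have hdec : ∀ c ∈ C, (c ∩ b).card + (c ∩ b').card + (c ∩ W).card = 4 := by
    intro c hc
    obtain ⟨hcB, hcb, hcb'⟩ := hCmem c hc
    have hcV : c ⊆ V := hsub c hcB
    have h1 : c ∩ W = c \ (b ∪ b') := by
      rw [hWdef, ← Finset.inter_sdiff_assoc, Finset.inter_eq_left.2 hcV]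
    have h2 : c ∩ (b ∪ b') = (c ∩ b) ∪ (c ∩ b') := Finset.inter_union_distrib_left c b b'
    have h3 : (c ∩ (b ∪ b')).card = (c ∩ b).card + (c ∩ b').card := by
      rw [h2, Finset.card_union_of_disjoint (hne.mono Finset.inter_subset_right Finset.inter_subset_right)]
    have h4 : (c \ (b ∪ b')).card + (c ∩ (b ∪ b')).card = c.card :=
      Finset.card_sdiff_add_card_inter c (b ∪ b')
    rw [h1, h3] at *
    rw [hsize c hcB] at h4
    omega
  have hcble : ∀ c ∈ C, (c ∩ b).card ≤ 1 := fun c hc =>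
    hlin c (hCmem c hc).1 b hb (hCmem c hc).2.1
  have hcb'le : ∀ c ∈ C, (c ∩ b').card ≤ 1 := fun c hc =>
    hlin c (hCmem c hc).1 b' hb' (hCmem c hc).2.2
  have hw2 : ∀ c ∈ C, 2 ≤ (c ∩ W).card := by
    intro c hc
    have := hdec c hc; have := hcble c hc; have := hcb'le c hc; omega
  -- the 2-subsets counting
  have hWpairs : ∀ c ∈ C, ∀ c' ∈ C, c ≠ c' → Disjoint ((c ∩ W).powersetCard 2) ((c' ∩ W).powersetCard 2) := by
    intro c hc c' hc' hcc
    rw [Finset.disjoint_left]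
    intro s hs hs'
    rw [Finset.mem_powersetCard] at hs hs'
    have hsub2 : s ⊆ c ∩ c' := Finset.subset_inter
      (hs.1.trans Finset.inter_subset_left) (hs'.1.trans Finset.inter_subset_left)
    have := (Finset.card_le_card hsub2).trans (hlin c (hCmem c hc).1 c' (hCmem c' hc').1 hcc)
    omega
  have hsum : ∑ c ∈ C, ((c ∩ W).powersetCard 2).card ≤ 6 := by
    rw [← Finset.card_biUnion hWpairs]
    have hsub3 : C.biUnion (fun c => (c ∩ W).powersetCard 2) ⊆ W.powersetCard 2 := by
      intro s hs
      rw [Finset.mem_biUnion] at hs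
      obtain ⟨c, hc, hs⟩ := hs
      rw [Finset.mem_powersetCard] at hs ⊢
      exact ⟨hs.1.trans Finset.inter_subset_right, hs.2⟩
    have := Finset.card_le_card hsub3
    rw [Finset.card_powersetCard, hW] at this
    exact this
  have hchoose : ∀ c ∈ C, ((c ∩ W).powersetCard 2).card = 1 := by
    by_contra hcon
    push_neg at hcon
    obtain ⟨c0, hc0, hc0ne⟩ := hcon
    have h1 : ∀ c ∈ C, 1 ≤ ((c ∩ W).powersetCard 2).card := by
      intro c hc
      rw [Finset.card_powersetCard]
      exact Nat.choose_pos (hw2 c hc)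
    have h2 : 2 ≤ ((c0 ∩ W).powersetCard 2).card := by
      have := h1 c0 hc0; omega
    have h3 : (C.erase c0).card • 1 ≤ ∑ c ∈ C.erase c0, ((c ∩ W).powersetCard 2).card :=
      Finset.card_nsmul_le_sum (C.erase c0) _ 1 (fun c hc => h1 c (Finset.mem_of_mem_erase hc))
    rw [smul_eq_mul, mul_one] at h3
    rw [Finset.card_erase_of_mem hc0, hC] at h3
    have h4 := Finset.add_sum_erase C (fun c => ((c ∩ W).powersetCard 2).card) hc0
    omega
  have hwcard : ∀ c ∈ C, (c ∩ W).card = 2 := by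
    intro c hc
    have h1 := hchoose c hc
    rw [Finset.card_powersetCard] at h1
    have h2 := hw2 c hc
    by_contra hcon
    have h3 : 3 ≤ (c ∩ W).card := by omega
    have := Nat.choose_le_choose 2 h3
    simp [Nat.choose] at this
    omega
  have hbcard : ∀ c ∈ C, (c ∩ b).card = 1 := by
    intro c hc
    have := hdec c hc; have := hcble c hc; have := hcb'le c hc; have := hwcard c hc; omega
  have hb'card : ∀ c ∈ C, (c ∩ b').card = 1 := by
    intro c hc
    have := hdec c hc; have := hcble c hc; have := hcb'le c hc; have := hwcard c hc; omega
  -- W-pair map is injective-ish and disjoint for blocks through a common point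
  have hqdisj : ∀ c ∈ C, ∀ c' ∈ C, c ≠ c' → ∀ v, v ∈ c → v ∈ c' → v ∉ W →
      Disjoint (c ∩ W) (c' ∩ W) := by
    intro c hc c' hc' hcc v hv hv' hvW
    have hsing := hsingle c (hCmem c hc).1 c' (hCmem c' hc').1 hcc v hv hv'
    rw [Finset.disjoint_left]
    intro w hw hw'
    have : w ∈ c ∩ c' := Finset.mem_inter.2
      ⟨(Finset.mem_inter.1 hw).1, (Finset.mem_inter.1 hw').1⟩
    rw [hsing, Finset.mem_singleton] at this
    exact hvW (this ▸ (Finset.mem_inter.1 hw).2)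
  have hqinj : ∀ c ∈ C, ∀ c' ∈ C, c ∩ W = c' ∩ W → c = c' := by
    intro c hc c' hc' hq
    by_contra hcc
    have h1 := hlin c (hCmem c hc).1 c' (hCmem c' hc').1 hcc
    have h2 : c ∩ W ⊆ c ∩ c' := Finset.subset_inter Finset.inter_subset_left
      (hq ▸ Finset.inter_subset_left)
    have := (Finset.card_le_card h2).trans h1
    rw [hwcard c hc] at this
    omega
  have hnotW : ∀ v ∈ b ∪ b', v ∉ W := by
    intro v hv hvW
    exact (Finset.mem_sdiff.1 hvW).2 hv
  -- degree bound
  set F : α → Finset (Finset α) := fun v => C.filter (fun c => v ∈ c) with hFdef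
  have hdeg : ∀ v ∈ b ∪ b', (F v).card ≤ 2 := by
    intro v hv
    by_contra hcon
    push_neg at hcon
    have hdisj2 : ∀ c ∈ F v, ∀ c' ∈ F v, c ≠ c' → Disjoint (c ∩ W) (c' ∩ W) := by
      intro c hc c' hc' hcc
      rw [hFdef, Finset.mem_filter] at hc hc'
      exact hqdisj c hc.1 c' hc'.1 hcc v hc.2 hc'.2 (hnotW v hv)
    have hbu := Finset.card_biUnion hdisj2
    have hsub4 : (F v).biUnion (fun c => c ∩ W) ⊆ W := by
      intro w hw
      rw [Finset.mem_biUnion] at hw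
      obtain ⟨c, hc, hw⟩ := hw
      exact (Finset.mem_inter.1 hw).2
    have h5 := Finset.card_le_card hsub4
    rw [hbu, hW] at h5
    have h6 : ∑ c ∈ F v, (c ∩ W).card = 2 * (F v).card := by
      rw [Finset.sum_congr rfl (fun c hc => hwcard c (Finset.mem_filter.1 hc).1)]
      simp [mul_comm]
      rfl
    omega
  -- double counting: sum of degrees over b is 6
  have hsum6 : ∑ v ∈ b, (F v).card = 6 := by
    have h1 : ∀ v, (F v).card = ∑ c ∈ C, if v ∈ c then 1 else 0 := by
      intro v
      rw [hFdef]
      exact Finset.card_filter _ _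
    calc ∑ v ∈ b, (F v).card = ∑ v ∈ b, ∑ c ∈ C, if v ∈ c then 1 else 0 := by
          exact Finset.sum_congr rfl (fun v _ => h1 v)
      _ = ∑ c ∈ C, ∑ v ∈ b, if v ∈ c then 1 else 0 := Finset.sum_comm
      _ = ∑ c ∈ C, (b.filter (fun v => v ∈ c)).card := by
          exact Finset.sum_congr rfl (fun c _ => by simp [Finset.card_filter])
      _ = ∑ c ∈ C, (c ∩ b).card := by
          refine Finset.sum_congr rfl (fun c _ => ?_)
          rw [Finset.filter_mem_eq_inter, Finset.inter_comm]
      _ = ∑ c ∈ C, 1 := Finset.sum_congr rfl (fun c hc => hbcard c hc)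
      _ = 6 := by rw [Finset.sum_const, hC]; rfl
  have hsum6' : ∑ v ∈ b', (F v).card = 6 := by
    have h1 : ∀ v, (F v).card = ∑ c ∈ C, if v ∈ c then 1 else 0 := by
      intro v
      rw [hFdef]
      exact Finset.card_filter _ _
    calc ∑ v ∈ b', (F v).card = ∑ v ∈ b', ∑ c ∈ C, if v ∈ c then 1 else 0 := by
          exact Finset.sum_congr rfl (fun v _ => h1 v)
      _ = ∑ c ∈ C, ∑ v ∈ b', if v ∈ c then 1 else 0 := Finset.sum_comm
      _ = ∑ c ∈ C, (b'.filter (fun v => v ∈ c)).card := by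
          exact Finset.sum_congr rfl (fun c _ => by rw [Finset.card_filter])
      _ = ∑ c ∈ C, (c ∩ b').card := by
          refine Finset.sum_congr rfl (fun c _ => ?_)
          rw [Finset.filter_mem_eq_inter, Finset.inter_comm]
      _ = ∑ c ∈ C, 1 := Finset.sum_congr rfl (fun c hc => hb'card c hc)
      _ = 6 := by rw [Finset.sum_const, hC]; rfl
  -- points of degree 2
  have hb2card : ∀ (s : Finset α), s ⊆ b ∪ b' → s.card = 4 → ∑ v ∈ s, (F v).card = 6 →
      2 ≤ (s.filter (fun v => 2 ≤ (F v).card)).card := by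
    intro s hsbb hs4 hssum
    set s2 := s.filter (fun v => 2 ≤ (F v).card) with hs2def
    have hsplit : ∑ v ∈ s2, (F v).card + ∑ v ∈ s.filter (fun v => ¬ 2 ≤ (F v).card), (F v).card
        = ∑ v ∈ s, (F v).card := Finset.sum_filter_add_sum_filter_not s _ _
    have h1 : ∑ v ∈ s2, (F v).card ≤ 2 * s2.card := by
      calc ∑ v ∈ s2, (F v).card ≤ ∑ v ∈ s2, 2 := Finset.sum_le_sum (fun v hv => by
            rw [hs2def, Finset.mem_filter] at hv
            exact hdeg v (hsbb hv.1))
        _ = 2 * s2.card := by rw [Finset.sum_const]; ring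
    have h2 : ∑ v ∈ s.filter (fun v => ¬ 2 ≤ (F v).card), (F v).card
        ≤ (s.filter (fun v => ¬ 2 ≤ (F v).card)).card := by
      calc ∑ v ∈ s.filter (fun v => ¬ 2 ≤ (F v).card), (F v).card
          ≤ ∑ v ∈ s.filter (fun v => ¬ 2 ≤ (F v).card), 1 := Finset.sum_le_sum (fun v hv => by
            rw [Finset.mem_filter] at hv
            omega)
        _ = _ := by rw [Finset.sum_const]; ring
    have h3 : s2.card + (s.filter (fun v => ¬ 2 ≤ (F v).card)).card = s.card :=
      Finset.card_filter_add_card_filter_not _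
    omega
  have hB2 : 2 ≤ (b.filter (fun v => 2 ≤ (F v).card)).card :=
    hb2card b Finset.subset_union_left (hsize b hb) hsum6
  have hB2' : 2 ≤ (b'.filter (fun v => 2 ≤ (F v).card)).card :=
    hb2card b' Finset.subset_union_right (hsize b' hb') hsum6'
  set S : Finset α := b.filter (fun v => 2 ≤ (F v).card) ∪ b'.filter (fun v => 2 ≤ (F v).card)
    with hSdef
  have hScard : 4 ≤ S.card := by
    rw [hSdef, Finset.card_union_of_disjoint
      (hne.mono (Finset.filter_subset _ _) (Finset.filter_subset _ _))]
    omega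
  have hSmem : ∀ v ∈ S, v ∈ b ∪ b' ∧ (F v).card = 2 := by
    intro v hv
    rw [hSdef, Finset.mem_union, Finset.mem_filter, Finset.mem_filter] at hv
    rcases hv with hv | hv
    · exact ⟨Finset.mem_union_left _ hv.1, le_antisymm (hdeg v (Finset.mem_union_left _ hv.1)) hv.2⟩
    · exact ⟨Finset.mem_union_right _ hv.1, le_antisymm (hdeg v (Finset.mem_union_right _ hv.1)) hv.2⟩
  obtain ⟨w0, hw0⟩ : W.Nonempty := by rw [← Finset.card_pos, hW]; norm_num
  -- each point of S lies on exactly two blocks whose W-pairs partition W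
  have htwo : ∀ v ∈ S, ∃ c1 c2, c1 ∈ C ∧ c2 ∈ C ∧ c1 ≠ c2 ∧ v ∈ c1 ∧ v ∈ c2 ∧
      F v = {c1, c2} ∧ (c1 ∩ W) ∪ (c2 ∩ W) = W := by
    intro v hv
    obtain ⟨hvbb, hv2⟩ := hSmem v hv
    obtain ⟨c1, c2, hc12, hF⟩ := Finset.card_eq_two.1 hv2
    have hc1 : c1 ∈ F v := by rw [hF]; simp
    have hc2 : c2 ∈ F v := by rw [hF]; simp
    rw [hFdef, Finset.mem_filter] at hc1 hc2
    have hdisj5 := hqdisj c1 hc1.1 c2 hc2.1 hc12 v hc1.2 hc2.2 (hnotW v hvbb)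
    have hunion : (c1 ∩ W) ∪ (c2 ∩ W) = W := by
      apply Finset.eq_of_subset_of_card_le
        (Finset.union_subset Finset.inter_subset_right Finset.inter_subset_right)
      rw [Finset.card_union_of_disjoint hdisj5, hwcard c1 hc1.1, hwcard c2 hc2.1, hW]
    exact ⟨c1, c2, hc1.1, hc2.1, hc12, hc1.2, hc2.2, hF, hunion⟩
  have hex : ∀ v ∈ S, ∃ c, c ∈ C ∧ v ∈ c ∧ w0 ∈ c := by
    intro v hv
    obtain ⟨c1, c2, hc1, hc2, hc12, hv1, hv2, hF, hu⟩ := htwo v hv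
    have : w0 ∈ (c1 ∩ W) ∪ (c2 ∩ W) := by rw [hu]; exact hw0
    rw [Finset.mem_union] at this
    rcases this with h | h
    · exact ⟨c1, hc1, hv1, (Finset.mem_inter.1 h).1⟩
    · exact ⟨c2, hc2, hv2, (Finset.mem_inter.1 h).1⟩
  classical
  set τ : α → Finset α := fun v =>
    if h : ∃ c, c ∈ C ∧ v ∈ c ∧ w0 ∈ c then h.choose else ∅ with hτdef
  have hτ : ∀ v ∈ S, τ v ∈ C ∧ v ∈ τ v ∧ w0 ∈ τ v := by
    intro v hv
    have h := hex v hv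
    rw [hτdef]
    simp only [dif_pos h]
    exact h.choose_spec
  have hother : ∀ v ∈ S, ∃ c', c' ∈ C ∧ v ∈ c' ∧ c' ≠ τ v ∧ c' ∩ W = W \ (τ v ∩ W) := by
    intro v hv
    obtain ⟨c1, c2, hc1, hc2, hc12, hv1, hv2, hF, hu⟩ := htwo v hv
    obtain ⟨hτC, hτv, hτw0⟩ := hτ v hv
    have hτF : τ v ∈ F v := by rw [hFdef, Finset.mem_filter]; exact ⟨hτC, hτv⟩
    rw [hF, Finset.mem_insert, Finset.mem_singleton] at hτF
    have hdisj5 : Disjoint (c1 ∩ W) (c2 ∩ W) :=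
      hqdisj c1 hc1 c2 hc2 hc12 v hv1 hv2 (hnotW v (hSmem v hv).1)
    rcases hτF with h | h
    · refine ⟨c2, hc2, hv2, by rw [h]; exact hc12.symm, ?_⟩
      have h9 := Finset.union_sdiff_cancel_left hdisj5
      rw [hu] at h9
      rw [h]; exact h9.symm
    · refine ⟨c1, hc1, hv1, by rw [h]; exact hc12, ?_⟩
      have h9 := Finset.union_sdiff_cancel_right hdisj5
      rw [hu] at h9
      rw [h]; exact h9.symm
  have hinj : Set.InjOn τ S := by
    intro v hv u hu hvu
    by_contra hne2
    obtain ⟨d1, hd1C, hd1v, hd1ne, hd1W⟩ := hother v hv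
    obtain ⟨d2, hd2C, hd2v, hd2ne, hd2W⟩ := hother u hu
    have hd12 : d1 = d2 := hqinj d1 hd1C d2 hd2C (by rw [hd1W, hd2W, hvu])
    obtain ⟨hτC, hτvv, _⟩ := hτ v hv
    obtain ⟨_, hτuu, _⟩ := hτ u hu
    have hpair : ({v, u} : Finset α) ⊆ τ v ∩ d1 := by
      intro x hx
      rw [Finset.mem_insert, Finset.mem_singleton] at hx
      rcases hx with rfl | rfl
      · exact Finset.mem_inter.2 ⟨hτvv, hd1v⟩
      · exact Finset.mem_inter.2 ⟨hvu ▸ hτuu, hd12 ▸ hd2v⟩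
    have h2le : 2 ≤ (τ v ∩ d1).card := by
      have := Finset.card_le_card hpair
      rwa [Finset.card_pair hne2] at this
    have := hlin (τ v) (hCmem _ hτC).1 d1 (hCmem _ hd1C).1 (Ne.symm hd1ne)
    omega
  have hmaps : ∀ v ∈ S, τ v ∈ C.filter (fun c => w0 ∈ c) := by
    intro v hv
    obtain ⟨h1, _, h3⟩ := hτ v hv
    exact Finset.mem_filter.2 ⟨h1, h3⟩
  have hcard1 : S.card ≤ (C.filter (fun c => w0 ∈ c)).card :=
    Finset.card_le_card_of_injOn τ hmaps hinj
  have hcard2 : (C.filter (fun c => w0 ∈ c)).card ≤ 3 := by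
    have hmaps2 : ∀ c ∈ C.filter (fun c => w0 ∈ c),
        (c ∩ W).erase w0 ∈ (W.erase w0).powersetCard 1 := by
      intro c hc
      rw [Finset.mem_filter] at hc
      have hw0c : w0 ∈ c ∩ W := Finset.mem_inter.2 ⟨hc.2, hw0⟩
      rw [Finset.mem_powersetCard]
      constructor
      · exact Finset.erase_subset_erase w0 Finset.inter_subset_right
      · rw [Finset.card_erase_of_mem hw0c, hwcard c hc.1]
    have hinj2 : Set.InjOn (fun c => (c ∩ W).erase w0) (C.filter (fun c => w0 ∈ c)) := by
      intro c hc c' hc' heq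
      rw [Finset.coe_filter, Set.mem_setOf_eq] at hc hc'
      apply hqinj c hc.1 c' hc'.1
      have h1 : insert w0 ((c ∩ W).erase w0) = c ∩ W :=
        Finset.insert_erase (Finset.mem_inter.2 ⟨hc.2, hw0⟩)
      have h2 : insert w0 ((c' ∩ W).erase w0) = c' ∩ W :=
        Finset.insert_erase (Finset.mem_inter.2 ⟨hc'.2, hw0⟩)
      dsimp only at heq
      rw [← h1, ← h2, heq]
    have := Finset.card_le_card_of_injOn _ hmaps2 hinj2
    rwa [Finset.card_powersetCard, Finset.card_erase_of_mem hw0, hW] at this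
  omega
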